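/- Let n_j = n_{j+1} in the flag n. Then modulo I_RKst, J_α^n ≡ −J_{α_1,...,α_{j-1}, α_{j+1}−1, α_j+1, ..., α_l}^n (swap of adjacent entries with shift). In particular, if α_j = α_{j+1} − 1 and n_j = n_{j+1}, then J_α^n ≡ 0 modulo I_RKst. -/

import Mathlib

open scoped Classical

noncomputable section

/-- The monomial (word) `u_{l_1} u_{l_2} ⋯ u_{l_n}` in the free associative algebra
`U = ℤ⟨u_1, …, u_N⟩`, whose variables are indexed by `Fin N`. -/
def word (N : ℕ) (l : List (Fin N)) : FreeAlgebra ℤ (Fin N) :=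
  (l.map (FreeAlgebra.ι ℤ)).prod

/-- The generating relations of the two-sided ideal `I_RKst`:
`u_b (u_a u_c - u_c u_a) - (u_a u_c - u_c u_a) u_b = 0` for `a < b < c`, together with
`w = 0` for every word `w` with a repeated letter. -/
inductive RKRel (N : ℕ) : FreeAlgebra ℤ (Fin N) → FreeAlgebra ℤ (Fin N) → Prop
  | knuth_rotation (a b c : Fin N) (hab : a < b) (hbc : b < c) :
      RKRel N
        (FreeAlgebra.ι ℤ b *
            (FreeAlgebra.ι ℤ a * FreeAlgebra.ι ℤ c - FreeAlgebra.ι ℤ c * FreeAlgebra.ι ℤ a) -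
          (FreeAlgebra.ι ℤ a * FreeAlgebra.ι ℤ c - FreeAlgebra.ι ℤ c * FreeAlgebra.ι ℤ a) *
            FreeAlgebra.ι ℤ b)
        0
  | repeated (l : List (Fin N)) (h : ¬ l.Nodup) : RKRel N (word N l) 0

/-- The noncommutative elementary symmetric function
`e_d(u) = ∑_{N ≥ i_1 > i_2 > ⋯ > i_d ≥ 1} u_{i_1} ⋯ u_{i_d}` (so `e_0 = 1` and `e_d = 0`
for `d > N`). -/
def esym (N d : ℕ) : FreeAlgebra ℤ (Fin N) :=
  ∑ f : Fin d → Fin N, if StrictAnti f then word N (List.ofFn f) else 0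

/-- The canonical projection `U → U/I_RKst`. -/
def pr (N : ℕ) : FreeAlgebra ℤ (Fin N) →ₐ[ℤ] RingQuot (RKRel N) :=
  RingQuot.mkAlgHom ℤ (RKRel N)


/-- The flagged noncommutative elementary symmetric function
`e_d([m]) = ∑_{m ≥ i_1 > ⋯ > i_d ≥ 1} u_{i_1} ⋯ u_{i_d}` (letters `1, …, m` correspond to
indices `0, …, m-1` of `Fin N`). -/
def esymFlag (N m d : ℕ) : FreeAlgebra ℤ (Fin N) :=
  ∑ f : Fin d → Fin N,
    if StrictAnti f ∧ ∀ i, (f i : ℕ) < m then word N (List.ofFn f) else 0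

/-- `e_d([m])` with integer index: `e_d([m]) = 0` for `d < 0`. -/
def esymFlagZ (N m : ℕ) (d : ℤ) : FreeAlgebra ℤ (Fin N) :=
  if 0 ≤ d then esymFlag N m d.toNat else 0

/-- The noncommutative column flagged Schur function
`J_α^n = ∑_{π ∈ S_l} sgn(π) e_{α_1+π(1)-1}([n_1]) ⋯ e_{α_l+π(l)-l}([n_l])`
(with integer-valued entries allowed in `α`). -/
def Jflag (N l : ℕ) (α : Fin l → ℤ) (n : Fin l → ℕ) : FreeAlgebra ℤ (Fin N) :=
  ∑ σ : Equiv.Perm (Fin l), ((Equiv.Perm.sign σ : ℤˣ) : ℤ) •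
    (List.ofFn fun k : Fin l =>
      esymFlagZ N (n k) (α k + ((σ k : ℕ) : ℤ) - ((k : ℕ) : ℤ))).prod

/-- The composition obtained from `α` by replacing the entries `(α_j, α_{j+1})`
by `(α_{j+1} − 1, α_j + 1)`. -/
def swapComp (l : ℕ) (α : Fin l → ℤ) (j : ℕ) (hj : j + 1 < l) : Fin l → ℤ := fun k =>
  if (k : ℕ) = j then α ⟨j + 1, hj⟩ - 1
  else if (k : ℕ) = j + 1 then α ⟨j, by omega⟩ + 1
  else α k

variable {N : ℕ}

/-- image of a generator in the quotient -/
def yv (N : ℕ) (i : Fin N) : RingQuot (RKRel N) := pr N (FreeAlgebra.ι ℤ i)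

lemma prWord (l : List (Fin N)) : pr N (word N l) = (l.map (yv N)).prod := by
  unfold word
  rw [map_list_prod, List.map_map]
  rfl

lemma wordDup (l : List (Fin N)) (h : ¬ l.Nodup) : (l.map (yv N)).prod = 0 := by
  rw [← prWord]
  have := RingQuot.mkAlgHom_rel ℤ (RKRel.repeated l h)
  simpa [pr] using this

lemma yrel {a b c : Fin N} (hab : a < b) (hbc : b < c) :
    yv N b * (yv N a * yv N c - yv N c * yv N a) =
      (yv N a * yv N c - yv N c * yv N a) * yv N b := by
  have := RingQuot.mkAlgHom_rel ℤ (RKRel.knuth_rotation a b c hab hbc)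
  have h2 : pr N (FreeAlgebra.ι ℤ b *
            (FreeAlgebra.ι ℤ a * FreeAlgebra.ι ℤ c - FreeAlgebra.ι ℤ c * FreeAlgebra.ι ℤ a) -
          (FreeAlgebra.ι ℤ a * FreeAlgebra.ι ℤ c - FreeAlgebra.ι ℤ c * FreeAlgebra.ι ℤ a) *
            FreeAlgebra.ι ℤ b) = 0 := by
    simpa [pr] using this
  rw [map_sub, map_mul, map_mul, map_sub, map_mul, map_mul, sub_eq_zero] at h2
  exact h2

lemma yy (a : Fin N) : yv N a * yv N a = 0 := by
  have := wordDup [a, a] (by simp)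
  simpa using this

lemma yay (a b : Fin N) : yv N a * yv N b * yv N a = 0 := by
  have := wordDup [a, b, a] (by simp)
  simpa [mul_assoc] using this

def cc (N : ℕ) (a t : Fin N) : RingQuot (RKRel N) :=
  yv N a * yv N t - yv N t * yv N a

lemma mul_self_mid (a b : Fin N) : yv N a * (yv N b * yv N a) = 0 := by
  rw [← mul_assoc]; exact yay a b

lemma mul_self_left (a b : Fin N) : yv N a * (yv N a * yv N b) = 0 := by
  rw [← mul_assoc, yy, zero_mul]

lemma mul_self_right (a b : Fin N) : yv N b * yv N a * yv N a = 0 := by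
  rw [mul_assoc, yy, mul_zero]

lemma ccomm {a b t : Fin N} (hab : a ≤ b) (hbt : b ≤ t) :
    yv N b * cc N a t = cc N a t * yv N b := by
  rcases eq_or_lt_of_le hab with rfl | hab'
  · unfold cc
    rw [mul_sub, sub_mul, mul_self_left, mul_self_mid, yay, mul_self_right]
  · rcases eq_or_lt_of_le hbt with rfl | hbt'
    · unfold cc
      rw [mul_sub, sub_mul, mul_self_mid, mul_self_left, mul_self_right, yay]
    · exact yrel hab' hbt'

lemma cc_mul_self (a t : Fin N) : cc N a t * yv N a = 0 := by
  unfold cc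
  rw [sub_mul, mul_assoc, mul_assoc, yy, mul_zero, mul_self_mid, sub_zero]

lemma sort_insert_max {a : Fin N} {s : Finset (Fin N)} (ha : a ∉ s) (hmax : ∀ b ∈ s, b ≤ a) :
    (insert a s).sort (· ≤ ·) = s.sort (· ≤ ·) ++ [a] := by
  refine ((fun hp hs => List.Perm.eq_of_pairwise' (Finset.pairwise_sort _ _) hs hp) ?_ ?_)
  · rw [← Multiset.coe_eq_coe]
    have h1 : ((insert a s).sort (· ≤ ·) : Multiset (Fin N)) = (insert a s).val :=
      Finset.sort_eq _ _
    have h2 : ((s.sort (· ≤ ·) ++ [a] : List (Fin N)) : Multiset (Fin N))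
        = (s.sort (· ≤ ·) : Multiset (Fin N)) + ({a} : Multiset (Fin N)) := by
      rfl
    rw [h1, Finset.insert_val_of_notMem ha, h2, Finset.sort_eq, add_comm,
      Multiset.singleton_add]
  · rw [List.pairwise_append]
    refine ⟨Finset.pairwise_sort _ _, by simp, ?_⟩
    intro x hx y hy
    simp only [List.mem_singleton] at hy
    subst hy
    exact hmax x (Finset.mem_sort _ |>.1 hx)

def PP (N : ℕ) (s : Finset (Fin N)) : RingQuot (RKRel N) :=
  (((s.sort (· ≤ ·)).reverse).map (yv N)).prod

lemma PP_empty : PP N ∅ = 1 := by simp [PP]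

lemma PP_insert {a : Fin N} {s : Finset (Fin N)} (hmax : ∀ b ∈ s, b < a) :
    PP N (insert a s) = yv N a * PP N s := by
  have ha : a ∉ s := fun h => absurd (hmax a h) (lt_irrefl a)
  unfold PP
  rw [sort_insert_max ha (fun b hb => (hmax b hb).le)]
  simp

lemma cc_PP {a t : Fin N} (s : Finset (Fin N)) (hs : ∀ b ∈ s, b ≤ t) (ha : a ∈ s) :
    cc N a t * PP N s = 0 := by
  induction s using Finset.induction_on_max with
  | empty => simp at ha
  | insert b u hmax ih =>
    rw [PP_insert hmax]
    rcases Finset.mem_insert.1 ha with rfl | hau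
    · rw [← mul_assoc, cc_mul_self, zero_mul]
    · have hab : a ≤ b := (hmax a hau).le
      have hbt : b ≤ t := hs b (Finset.mem_insert_self b u)
      rw [← mul_assoc, ← ccomm hab hbt, mul_assoc,
        ih (fun x hx => hs x (Finset.mem_insert_of_mem hx)) hau, mul_zero]

lemma commP {t : Fin N} (s : Finset (Fin N)) (hs : ∀ b ∈ s, b < t) :
    PP N s * yv N t - yv N t * PP N s = ∑ a ∈ s, cc N a t * PP N (s.erase a) := by
  induction s using Finset.induction_on_max with
  | empty => simp [PP_empty]
  | insert a u hmax ih =>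
    have hau : a ∉ u := fun h => absurd (hmax a h) (lt_irrefl a)
    rw [PP_insert hmax, Finset.sum_insert hau]
    have key : yv N a * PP N u * yv N t - yv N t * (yv N a * PP N u)
        = yv N a * (PP N u * yv N t - yv N t * PP N u) + cc N a t * PP N u := by
      unfold cc
      simp only [mul_sub, sub_mul, mul_assoc]
      abel
    rw [key, ih (fun b hb => hs b (Finset.mem_insert_of_mem hb)), Finset.mul_sum]
    rw [Finset.erase_insert hau]
    have congr1 : ∀ b ∈ u, yv N a * (cc N b t * PP N (u.erase b))
        = cc N b t * PP N ((insert a u).erase b) := by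
      intro b hb
      have h1 : (insert a u).erase b = insert a (u.erase b) := by
        refine Finset.erase_insert_of_ne ?_
        exact fun h => absurd (hmax b hb) (h ▸ lt_irrefl a)
      rw [h1, PP_insert (fun x hx => hmax x (Finset.mem_of_mem_erase hx)),
        ← mul_assoc, ccomm (hmax b hb).le (hs a (Finset.mem_insert_self a u)).le, mul_assoc]
    rw [Finset.sum_congr rfl congr1]
    exact add_comm _ _

/-- letters `< m` -/
def SS (N m : ℕ) : Finset (Fin N) := Finset.univ.filter (fun i => (i : ℕ) < m)

def FF (N m k : ℕ) : RingQuot (RKRel N) := ∑ s ∈ (SS N m).powersetCard k, PP N s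

lemma FF_zero (m : ℕ) : FF N m 0 = 1 := by
  simp [FF, Finset.powersetCard_zero, PP_empty]

lemma SS_zero : SS N 0 = ∅ := by
  ext i; simp [SS]

lemma FF_zero_flag (k : ℕ) : FF N 0 (k + 1) = 0 := by
  have : (SS N 0).powersetCard (k+1) = ∅ := by
    rw [SS_zero]
    rw [Finset.powersetCard_eq_empty]
    simp
  simp [FF, this]

lemma SS_stable {m : ℕ} (hm : N ≤ m) : SS N (m + 1) = SS N m := by
  ext i
  simp only [SS, Finset.mem_filter, Finset.mem_univ, true_and]
  have := i.isLt
  omega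

lemma SS_succ {m : ℕ} (hm : m < N) : SS N (m + 1) = insert ⟨m, hm⟩ (SS N m) := by
  ext i
  simp only [SS, Finset.mem_filter, Finset.mem_univ, true_and, Finset.mem_insert]
  constructor
  · intro h
    rcases Nat.lt_succ_iff_lt_or_eq.1 h with h | h
    · exact Or.inr h
    · exact Or.inl (Fin.ext h)
  · rintro (rfl | h)
    · simp
    · omega

lemma mem_SS_lt {m : ℕ} (hm : m < N) {b : Fin N} (hb : b ∈ SS N m) : b < (⟨m, hm⟩ : Fin N) := by
  simp only [SS, Finset.mem_filter] at hb
  exact hb.2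

lemma FF_stable {m : ℕ} (hm : N ≤ m) (k : ℕ) : FF N (m + 1) k = FF N m k := by
  rw [FF, FF, SS_stable hm]

lemma FF_succ {m : ℕ} (hm : m < N) (k : ℕ) :
    FF N (m + 1) (k + 1) = FF N m (k + 1) + yv N ⟨m, hm⟩ * FF N m k := by
  set t : Fin N := ⟨m, hm⟩
  have ht : t ∉ SS N m := by simp [SS, t]
  rw [FF, SS_succ hm, Finset.powersetCard_succ_insert ht]
  rw [Finset.sum_union]
  · congr 1
    rw [Finset.sum_image ?inj]
    case inj =>
      intro u hu v hv huv
      have hut : t ∉ u := fun h =>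
        ht ((Finset.mem_powersetCard.1 hu).1 h)
      have hvt : t ∉ v := fun h =>
        ht ((Finset.mem_powersetCard.1 hv).1 h)
      rw [← Finset.erase_insert hut, ← Finset.erase_insert hvt, huv]
    rw [FF, Finset.mul_sum]
    refine Finset.sum_congr rfl (fun u hu => ?_)
    exact PP_insert (fun b hb => mem_SS_lt hm ((Finset.mem_powersetCard.1 hu).1 hb))
  · rw [Finset.disjoint_left]
    intro s hs hs'
    obtain ⟨u, hu, rfl⟩ := Finset.mem_image.1 hs'
    have : t ∈ SS N m := (Finset.mem_powersetCard.1 hs).1 (Finset.mem_insert_self t u)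
    exact ht this

lemma inner_bij {M : Type*} [AddCommMonoid M] (T : Finset (Fin N)) (k : ℕ) (a : Fin N)
    (ha : a ∈ T) (g : Finset (Fin N) → M) :
    ∑ s ∈ (T.powersetCard (k + 1)).filter (fun s => a ∈ s), g (s.erase a)
      = ∑ u ∈ (T.erase a).powersetCard k, g u := by
  refine Finset.sum_nbij' (fun s => s.erase a) (fun u => insert a u) ?_ ?_ ?_ ?_ ?_
  · intro s hs
    simp only [Finset.mem_filter, Finset.mem_powersetCard] at hs
    obtain ⟨⟨hsub, hcard⟩, hmem⟩ := hs
    rw [Finset.mem_powersetCard]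
    exact ⟨Finset.erase_subset_erase a hsub, by rw [Finset.card_erase_of_mem hmem, hcard]; omega⟩
  · intro u hu
    rw [Finset.mem_powersetCard] at hu
    obtain ⟨hsub, hcard⟩ := hu
    have hau : a ∉ u := fun h => Finset.notMem_erase a T (hsub h)
    simp only [Finset.mem_filter, Finset.mem_powersetCard]
    refine ⟨⟨?_, ?_⟩, Finset.mem_insert_self a u⟩
    · exact Finset.insert_subset ha (hsub.trans (Finset.erase_subset a T))
    · rw [Finset.card_insert_of_notMem hau, hcard]
  · intro s hs
    simp only [Finset.mem_filter] at hs
    exact Finset.insert_erase hs.2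
  · intro u hu
    rw [Finset.mem_powersetCard] at hu
    have hau : a ∉ u := fun h => Finset.notMem_erase a T (hu.1 h)
    exact Finset.erase_insert hau
  · intro s hs
    rfl

lemma y_sandwich (t : Fin N) (l : List (Fin N)) :
    yv N t * (l.map (yv N)).prod * yv N t = 0 := by
  have h : yv N t * (l.map (yv N)).prod * yv N t
      = ((t :: (l ++ [t])).map (yv N)).prod := by
    simp [List.prod_append, mul_assoc]
  rw [h]
  apply wordDup
  simp [List.nodup_cons]

lemma x_PP_x (t : Fin N) (s : Finset (Fin N)) : yv N t * PP N s * yv N t = 0 :=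
  y_sandwich t _

lemma x_FF_x {m : ℕ} (hm : m < N) (k : ℕ) :
    yv N ⟨m, hm⟩ * FF N m k * yv N ⟨m, hm⟩ = 0 := by
  rw [FF, Finset.mul_sum, Finset.sum_mul]
  refine Finset.sum_eq_zero (fun s _ => x_PP_x _ s)

lemma FL1 {m : ℕ} (hm : m < N) (k : ℕ) :
    FF N m (k + 1) * yv N ⟨m, hm⟩ - yv N ⟨m, hm⟩ * FF N m (k + 1)
      = (∑ a ∈ SS N m, cc N a ⟨m, hm⟩) * FF N m k := by
  set t : Fin N := ⟨m, hm⟩ with ht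
  have step1 : FF N m (k + 1) * yv N t - yv N t * FF N m (k + 1)
      = ∑ s ∈ (SS N m).powersetCard (k + 1), (PP N s * yv N t - yv N t * PP N s) := by
    rw [FF, Finset.sum_mul, Finset.mul_sum, ← Finset.sum_sub_distrib]
  rw [step1]
  have step2 : ∀ s ∈ (SS N m).powersetCard (k + 1),
      PP N s * yv N t - yv N t * PP N s = ∑ a ∈ s, cc N a t * PP N (s.erase a) := by
    intro s hs
    exact commP s (fun b hb => mem_SS_lt hm ((Finset.mem_powersetCard.1 hs).1 hb))
  rw [Finset.sum_congr rfl step2]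
  -- extend inner sum over a ∈ s to a ∈ SS N m with indicator
  have step3 : ∀ s ∈ (SS N m).powersetCard (k + 1),
      ∑ a ∈ s, cc N a t * PP N (s.erase a)
        = ∑ a ∈ SS N m, if a ∈ s then cc N a t * PP N (s.erase a) else 0 := by
    intro s hs
    rw [Finset.sum_ite_mem]
    rw [Finset.inter_eq_right.2 ((Finset.mem_powersetCard.1 hs).1)]
  rw [Finset.sum_congr rfl step3, Finset.sum_comm]
  have step4 : ∀ a ∈ SS N m,
      (∑ s ∈ (SS N m).powersetCard (k + 1), if a ∈ s then cc N a t * PP N (s.erase a) else 0)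
        = cc N a t * FF N m k := by
    intro a ha
    rw [← Finset.sum_filter]
    rw [inner_bij (SS N m) k a ha (fun u => cc N a t * PP N u)]
    rw [FF, Finset.mul_sum]
    refine Finset.sum_subset (Finset.powersetCard_mono (Finset.erase_subset a (SS N m))) ?_
    intro u hu hnot
    have hau : a ∈ u := by
      by_contra hau
      refine hnot (Finset.mem_powersetCard.2 ⟨?_, (Finset.mem_powersetCard.1 hu).2⟩)
      intro x hx
      refine Finset.mem_erase.2 ⟨fun hxa => hau (hxa ▸ hx), (Finset.mem_powersetCard.1 hu).1 hx⟩
    exact cc_PP u (fun b hb => (mem_SS_lt hm ((Finset.mem_powersetCard.1 hu).1 hb)).le) hau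
  rw [Finset.sum_congr rfl step4, Finset.sum_mul]

lemma FF_comm (m p q : ℕ) : FF N m p * FF N m q = FF N m q * FF N m p := by
  induction m generalizing p q with
  | zero =>
    cases p with
    | zero => rw [FF_zero]; rw [one_mul, mul_one]
    | succ p => cases q with
      | zero => rw [FF_zero, one_mul, mul_one]
      | succ q => rw [FF_zero_flag, zero_mul, mul_zero]
  | succ m ih =>
    by_cases hm : m < N
    · cases p with
      | zero => rw [FF_zero, one_mul, mul_one]
      | succ p => cases q with
        | zero => rw [FF_zero, one_mul, mul_one]
        | succ q =>
          set x := yv N ⟨m, hm⟩ with hx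
          set C := ∑ a ∈ SS N m, cc N a ⟨m, hm⟩ with hC
          have h1 := FL1 hm p
          have h2 := FL1 hm q
          rw [FF_succ hm, FF_succ hm]
          have e1 : FF N m (p+1) * x = x * FF N m (p+1) + C * FF N m p := by
            rw [hC, ← h1, hx]; abel
          have e2 : FF N m (q+1) * x = x * FF N m (q+1) + C * FF N m q := by
            rw [hC, ← h2, hx]; abel
          have hxx : ∀ a b : ℕ, x * FF N m a * (x * FF N m b) = 0 := by
            intro a b
            rw [← mul_assoc, x_FF_x hm, zero_mul]
          simp only [mul_add, add_mul, hxx, add_zero]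
          rw [← mul_assoc (FF N m (p+1)) x (FF N m q), e1,
            ← mul_assoc (FF N m (q+1)) x (FF N m p), e2]
          simp only [add_mul, mul_assoc]
          rw [ih (p+1) (q+1), ih p (q+1), ih (p+1) q, ih p q]
          simp only [hx, ← mul_assoc, x_FF_x hm, zero_mul, add_zero, zero_add]
          abel
    · rw [FF_stable (by omega), FF_stable (by omega), ih]

lemma esymFlag_zero (m : ℕ) : esymFlag N m 0 = 1 := by
  unfold esymFlag
  rw [Fintype.sum_eq_single (f := fun _ => _) (fun i : Fin 0 => i.elim0)]
  · rw [if_pos]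
    · simp [word]
    · exact ⟨fun i => i.elim0, fun i => i.elim0⟩
  · intro g hg
    exact absurd (funext fun i => i.elim0) hg

lemma esymFlag_bot (k : ℕ) : esymFlag N 0 (k + 1) = 0 := by
  unfold esymFlag
  refine Finset.sum_eq_zero (fun f _ => ?_)
  rw [if_neg]
  rintro ⟨-, h⟩
  exact absurd (h 0) (by omega)

lemma esymFlag_stable {m : ℕ} (hm : N ≤ m) (k : ℕ) :
    esymFlag N (m + 1) k = esymFlag N m k := by
  unfold esymFlag
  refine Finset.sum_congr rfl (fun f _ => ?_)
  refine if_congr (and_congr_right fun _ => ?_) rfl rfl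
  constructor <;> intro h i <;> have := (f i).isLt <;> omega

lemma strictAnti_cons {k : ℕ} (a : Fin N) (g : Fin k → Fin N) :
    StrictAnti (Fin.cons a g : Fin (k + 1) → Fin N) ↔ (∀ i, g i < a) ∧ StrictAnti g := by
  constructor
  · intro h
    refine ⟨fun i => ?_, fun i j hij => ?_⟩
    · have := h (Fin.succ_pos i)
      simpa using this
    · have := h (Fin.succ_lt_succ_iff.2 hij)
      simpa using this
  · rintro ⟨hga, hg⟩ i j hij
    have hj : j ≠ 0 := fun h => by subst h; exact absurd hij (Fin.not_lt_zero i)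
    obtain ⟨j', rfl⟩ := Fin.eq_succ_of_ne_zero hj
    rcases Fin.eq_zero_or_eq_succ i with rfl | ⟨i', rfl⟩
    · simpa using hga j'
    · simp only [Fin.cons_succ]
      exact hg (Fin.succ_lt_succ_iff.1 hij)

lemma word_cons {k : ℕ} (a : Fin N) (g : Fin k → Fin N) :
    word N (List.ofFn (Fin.cons a g)) = FreeAlgebra.ι ℤ a * word N (List.ofFn g) := by
  rw [List.ofFn_succ]
  simp only [Fin.cons_zero, Fin.cons_succ]
  simp [word]

lemma cond_cons {k M : ℕ} (a : Fin N) (g : Fin k → Fin N) :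
    (StrictAnti (Fin.cons a g : Fin (k + 1) → Fin N) ∧
        ∀ i, ((Fin.cons a g : Fin (k + 1) → Fin N) i : ℕ) < M)
      ↔ ((∀ i, g i < a) ∧ StrictAnti g) ∧ (a : ℕ) < M := by
  rw [strictAnti_cons]
  constructor
  · rintro ⟨⟨h1, h2⟩, h3⟩
    exact ⟨⟨h1, h2⟩, by simpa using h3 0⟩
  · rintro ⟨⟨h1, h2⟩, h3⟩
    refine ⟨⟨h1, h2⟩, fun i => ?_⟩
    rcases Fin.eq_zero_or_eq_succ i with rfl | ⟨i', rfl⟩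
    · simpa using h3
    · simp only [Fin.cons_succ]
      have : (g i' : ℕ) < (a : ℕ) := h1 i'
      omega

lemma esymFlag_sum_cons (M k : ℕ) :
    esymFlag N M (k + 1) = ∑ a : Fin N, ∑ g : Fin k → Fin N,
      if ((∀ i, g i < a) ∧ StrictAnti g) ∧ (a : ℕ) < M
        then FreeAlgebra.ι ℤ a * word N (List.ofFn g) else 0 := by
  unfold esymFlag
  rw [← Equiv.sum_comp (Fin.consEquiv (fun _ => Fin N))
    (fun f : Fin (k + 1) → Fin N =>
      if StrictAnti f ∧ ∀ i, (f i : ℕ) < M then word N (List.ofFn f) else 0)]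
  rw [Fintype.sum_prod_type]
  refine Finset.sum_congr rfl (fun a _ => Finset.sum_congr rfl (fun g _ => ?_))
  have he : (Fin.consEquiv (fun _ => Fin N)) (a, g) = Fin.cons a g := rfl
  rw [he, word_cons]
  exact if_congr (cond_cons a g) rfl rfl

lemma esymFlag_succ {m : ℕ} (hm : m < N) (k : ℕ) :
    esymFlag N (m + 1) (k + 1)
      = esymFlag N m (k + 1) + FreeAlgebra.ι ℤ (⟨m, hm⟩ : Fin N) * esymFlag N m k := by
  rw [esymFlag_sum_cons (m + 1) k, esymFlag_sum_cons m k]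
  have split : ∀ (a : Fin N) (g : Fin k → Fin N),
      (if ((∀ i, g i < a) ∧ StrictAnti g) ∧ (a : ℕ) < m + 1
        then FreeAlgebra.ι ℤ a * word N (List.ofFn g) else 0)
      = (if ((∀ i, g i < a) ∧ StrictAnti g) ∧ (a : ℕ) < m
          then FreeAlgebra.ι ℤ a * word N (List.ofFn g) else 0)
        + (if ((∀ i, g i < a) ∧ StrictAnti g) ∧ a = ⟨m, hm⟩
            then FreeAlgebra.ι ℤ a * word N (List.ofFn g) else 0) := by
    intro a g
    by_cases hA : (∀ i, g i < a) ∧ StrictAnti g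
    · by_cases h1 : (a : ℕ) < m
      · have h2 : a ≠ ⟨m, hm⟩ := fun h => by subst h; exact absurd h1 (by simp)
        rw [if_pos ⟨hA, by omega⟩, if_pos ⟨hA, h1⟩, if_neg (fun h => h2 h.2), add_zero]
      · by_cases h2 : a = ⟨m, hm⟩
        · rw [if_pos ⟨hA, by rw [h2]; simp⟩, if_neg (fun h => h1 h.2), if_pos ⟨hA, h2⟩,
            zero_add]
        · have h3 : ¬ (a : ℕ) < m + 1 := by
            have : (a : ℕ) ≠ m := fun h => h2 (Fin.ext h)
            omega
          rw [if_neg (fun h => h3 h.2), if_neg (fun h => h1 h.2), if_neg (fun h => h2 h.2),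
            add_zero]
    · rw [if_neg (fun h => hA h.1), if_neg (fun h => hA h.1), if_neg (fun h => hA h.1),
        add_zero]
  simp only [split, Finset.sum_add_distrib]
  congr 1
  rw [Finset.sum_comm]
  have outer : ∀ g : Fin k → Fin N,
      (∑ a : Fin N, if ((∀ i, g i < a) ∧ StrictAnti g) ∧ a = ⟨m, hm⟩
          then FreeAlgebra.ι ℤ a * word N (List.ofFn g) else 0)
        = FreeAlgebra.ι ℤ (⟨m, hm⟩ : Fin N) *
            (if StrictAnti g ∧ ∀ i, (g i : ℕ) < m then word N (List.ofFn g) else 0) := by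
    intro g
    rw [Finset.sum_eq_single (⟨m, hm⟩ : Fin N)]
    · have : ((∀ i, g i < (⟨m, hm⟩ : Fin N)) ∧ StrictAnti g) ∧ (⟨m, hm⟩ : Fin N) = ⟨m, hm⟩
          ↔ (StrictAnti g ∧ ∀ i, (g i : ℕ) < m) := by
        constructor
        · rintro ⟨⟨h1, h2⟩, -⟩
          exact ⟨h2, fun i => h1 i⟩
        · rintro ⟨h2, h1⟩
          exact ⟨⟨fun i => h1 i, h2⟩, rfl⟩
      rw [if_congr this rfl rfl, mul_ite, mul_zero]
    · intro a _ ha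
      rw [if_neg (fun h => ha h.2)]
    · intro h
      exact absurd (Finset.mem_univ _) h
  rw [Finset.sum_congr rfl (fun g _ => outer g), ← Finset.mul_sum]
  unfold esymFlag
  rfl

lemma pr_esymFlag (m k : ℕ) : pr N (esymFlag N m k) = FF N m k := by
  induction m generalizing k with
  | zero =>
    cases k with
    | zero => rw [esymFlag_zero, map_one, FF_zero]
    | succ k => rw [esymFlag_bot, map_zero, FF_zero_flag]
  | succ m ih =>
    by_cases hm : m < N
    · cases k with
      | zero => rw [esymFlag_zero, map_one, FF_zero]
      | succ k =>
        rw [esymFlag_succ hm, map_add, map_mul, ih, ih, FF_succ hm]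
        rfl
    · rw [esymFlag_stable (by omega), ih, FF_stable (by omega)]

lemma prE_comm (m : ℕ) (d e : ℤ) :
    pr N (esymFlagZ N m d) * pr N (esymFlagZ N m e)
      = pr N (esymFlagZ N m e) * pr N (esymFlagZ N m d) := by
  unfold esymFlagZ
  split_ifs with h1 h2 h2
  · rw [pr_esymFlag, pr_esymFlag, FF_comm]
  · rw [map_zero, mul_zero, zero_mul]
  · rw [map_zero, mul_zero, zero_mul]
  · rfl

lemma prod_ofFn_swap_adj {M : Type*} [Monoid M] {l : ℕ} (F1 F2 : Fin l → M) (j : ℕ)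
    (hj : j + 1 < l)
    (hoff : ∀ k : Fin l, (k : ℕ) ≠ j → (k : ℕ) ≠ j + 1 → F1 k = F2 k)
    (hswap : F1 ⟨j, Nat.lt_of_succ_lt hj⟩ * F1 ⟨j + 1, hj⟩ = F2 ⟨j, Nat.lt_of_succ_lt hj⟩ * F2 ⟨j + 1, hj⟩) :
    (List.ofFn F1).prod = (List.ofFn F2).prod := by
  have hlen : ∀ F : Fin l → M, (List.ofFn F).length = l := fun F => List.length_ofFn (f := F)
  have decomp : ∀ F : Fin l → M, (List.ofFn F).prod
      = ((List.ofFn F).take j).prod *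
          (F ⟨j, Nat.lt_of_succ_lt hj⟩ * F ⟨j + 1, hj⟩ * ((List.ofFn F).drop (j + 2)).prod) := by
    intro F
    rw [← List.prod_take_mul_prod_drop (List.ofFn F) j]
    congr 1
    rw [List.drop_eq_getElem_cons (by rw [hlen]; omega)]
    rw [List.drop_eq_getElem_cons (l := (List.ofFn F)) (i := j + 1) (by rw [hlen]; omega)]
    rw [List.prod_cons, List.prod_cons]
    rw [List.getElem_ofFn, List.getElem_ofFn]
    rw [← mul_assoc]
  rw [decomp F1, decomp F2]
  have htake : (List.ofFn F1).take j = (List.ofFn F2).take j := by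
    apply List.ext_getElem
    · rw [List.length_take, List.length_take, hlen, hlen]
    · intro i h1 h2
      rw [List.getElem_take, List.getElem_take, List.getElem_ofFn, List.getElem_ofFn]
      have hi : i < j := by
        have := List.length_take (i := j) (l := List.ofFn F1) ▸ h1
        simp [hlen] at this ⊢
        omega
      apply hoff <;> simp <;> omega
  have hdrop : (List.ofFn F1).drop (j + 2) = (List.ofFn F2).drop (j + 2) := by
    apply List.ext_getElem
    · rw [List.length_drop, List.length_drop, hlen, hlen]
    · intro i h1 h2
      rw [List.getElem_drop, List.getElem_drop, List.getElem_ofFn, List.getElem_ofFn]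
      apply hoff <;> simp <;> omega
  rw [htake, hdrop, hswap]

lemma Jflag_pr (l : ℕ) (β : Fin l → ℤ) (n : Fin l → ℕ) :
    pr N (Jflag N l β n) = ∑ σ : Equiv.Perm (Fin l), ((Equiv.Perm.sign σ : ℤˣ) : ℤ) •
      (List.ofFn fun k : Fin l =>
        pr N (esymFlagZ N (n k) (β k + ((σ k : ℕ) : ℤ) - ((k : ℕ) : ℤ)))).prod := by
  unfold Jflag
  rw [map_sum]
  refine Finset.sum_congr rfl fun σ _ => ?_
  rw [map_zsmul]
  congr 1
  rw [map_list_prod, List.map_ofFn]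
  rfl

lemma G_swap (l : ℕ) (α : Fin l → ℤ) (n : Fin l → ℕ) (j : ℕ) (hj : j + 1 < l)
    (hn : n ⟨j, Nat.lt_of_succ_lt hj⟩ = n ⟨j + 1, hj⟩) (σ : Equiv.Perm (Fin l)) :
    (List.ofFn fun k : Fin l =>
        pr N (esymFlagZ N (n k) (α k + ((σ k : ℕ) : ℤ) - ((k : ℕ) : ℤ)))).prod
      = (List.ofFn fun k : Fin l =>
        pr N (esymFlagZ N (n k) (swapComp l α j hj k
          + (((σ * Equiv.swap (⟨j, Nat.lt_of_succ_lt hj⟩ : Fin l) (⟨j + 1, hj⟩ : Fin l)) k : ℕ) : ℤ) - ((k : ℕ) : ℤ)))).prod := by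
  have hlj : j < l := by omega
  set j0 : Fin l := ⟨j, hlj⟩ with hj0
  set j1 : Fin l := ⟨j + 1, hj⟩ with hj1
  apply prod_ofFn_swap_adj _ _ j hj
  · intro k hk1 hk2
    have h1 : k ≠ j0 := fun h => hk1 (by rw [h])
    have h2 : k ≠ j1 := fun h => hk2 (by rw [h])
    have hτ : (σ * Equiv.swap j0 j1) k = σ k := by
      rw [Equiv.Perm.mul_apply, Equiv.swap_apply_of_ne_of_ne h1 h2]
    rw [hτ]
    have hα : swapComp l α j hj k = α k := by
      simp only [swapComp, if_neg hk1, if_neg hk2]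
    rw [hα]
  · have e0 : (σ * Equiv.swap j0 j1) ⟨j, Nat.lt_of_succ_lt hj⟩ = σ j1 := by
      rw [Equiv.Perm.mul_apply]
      congr 1
      exact Equiv.swap_apply_left j0 j1
    have e1 : (σ * Equiv.swap j0 j1) ⟨j + 1, hj⟩ = σ j0 := by
      rw [Equiv.Perm.mul_apply]
      congr 1
      exact Equiv.swap_apply_right j0 j1
    have hα0 : swapComp l α j hj ⟨j, Nat.lt_of_succ_lt hj⟩ = α j1 - 1 := by
      simp [swapComp]
      rfl
    have hα1 : swapComp l α j hj ⟨j + 1, hj⟩ = α j0 + 1 := by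
      simp [swapComp]
      rfl
    rw [e0, e1, hα0, hα1]
    have harith1 : α j1 - 1 + ((σ j1 : ℕ) : ℤ) - (((⟨j, Nat.lt_of_succ_lt hj⟩ : Fin l) : ℕ) : ℤ)
        = α j1 + ((σ j1 : ℕ) : ℤ) - (((⟨j + 1, hj⟩ : Fin l) : ℕ) : ℤ) := by
      simp only [Fin.val_mk]
      push_cast
      ring
    have harith2 : α j0 + 1 + ((σ j0 : ℕ) : ℤ) - (((⟨j + 1, hj⟩ : Fin l) : ℕ) : ℤ)
        = α j0 + ((σ j0 : ℕ) : ℤ) - (((⟨j, Nat.lt_of_succ_lt hj⟩ : Fin l) : ℕ) : ℤ) := by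
      simp only [Fin.val_mk]
      push_cast
      ring
    rw [harith1, harith2]
    have hnn : n ⟨j, Nat.lt_of_succ_lt hj⟩ = n ⟨j + 1, hj⟩ := hn
    have goal' : pr N (esymFlagZ N (n ⟨j, Nat.lt_of_succ_lt hj⟩) (α j0 + ((σ j0 : ℕ) : ℤ) - ((j0 : ℕ) : ℤ)))
        * pr N (esymFlagZ N (n ⟨j + 1, hj⟩) (α j1 + ((σ j1 : ℕ) : ℤ) - ((j1 : ℕ) : ℤ)))
        = pr N (esymFlagZ N (n ⟨j, Nat.lt_of_succ_lt hj⟩) (α j1 + ((σ j1 : ℕ) : ℤ) - ((j1 : ℕ) : ℤ)))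
        * pr N (esymFlagZ N (n ⟨j + 1, hj⟩) (α j0 + ((σ j0 : ℕ) : ℤ) - ((j0 : ℕ) : ℤ))) := by
      rw [hnn]
      exact prE_comm _ _ _
    exact goal'

lemma sign_mul_swap_neg {l : ℕ} (j : ℕ) (hj : j + 1 < l) (σ : Equiv.Perm (Fin l)) :
    ((Equiv.Perm.sign (σ * Equiv.swap (⟨j, Nat.lt_of_succ_lt hj⟩ : Fin l) (⟨j + 1, hj⟩ : Fin l)) : ℤˣ) : ℤ)
      = -((Equiv.Perm.sign σ : ℤˣ) : ℤ) := by
  have hne : (⟨j, Nat.lt_of_succ_lt hj⟩ : Fin l) ≠ ⟨j + 1, hj⟩ := by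
    intro h
    have h2 := congrArg Fin.val h
    simp at h2
  rw [Equiv.Perm.sign_mul, Equiv.Perm.sign_swap hne]
  simp

lemma swap_mul_ne {l : ℕ} (j : ℕ) (hj : j + 1 < l) (σ : Equiv.Perm (Fin l)) :
    σ * Equiv.swap (⟨j, Nat.lt_of_succ_lt hj⟩ : Fin l) (⟨j + 1, hj⟩ : Fin l) ≠ σ := by
  intro h
  have h2 : Equiv.swap (⟨j, Nat.lt_of_succ_lt hj⟩ : Fin l) (⟨j + 1, hj⟩ : Fin l) = 1 :=
    mul_left_cancel (h.trans (mul_one σ).symm)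
  have h3 : Equiv.swap (⟨j, Nat.lt_of_succ_lt hj⟩ : Fin l) (⟨j + 1, hj⟩ : Fin l) (⟨j, Nat.lt_of_succ_lt hj⟩ : Fin l)
      = (⟨j, Nat.lt_of_succ_lt hj⟩ : Fin l) := by rw [h2]; rfl
  rw [Equiv.swap_apply_left] at h3
  have h4 := congrArg Fin.val h3
  simp at h4


/-- If `n_j = n_{j+1}`, then modulo `I_RKst`,
`J_α^n ≡ −J_{α_1,…,α_{j-1},α_{j+1}−1,α_j+1,…,α_l}^n`; in particular, if moreover
`α_j = α_{j+1} − 1`, then `J_α^n ≡ 0`. -/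
theorem Jflag_swap (N l : ℕ) (α : Fin l → ℕ) (n : Fin l → ℕ) (j : ℕ) (hj : j + 1 < l)
    (hn : n ⟨j, by omega⟩ = n ⟨j + 1, hj⟩) :
    pr N (Jflag N l (fun k => (α k : ℤ)) n) =
      - pr N (Jflag N l (swapComp l (fun k => (α k : ℤ)) j hj) n) ∧
    (((α ⟨j, by omega⟩ : ℤ) = (α ⟨j + 1, hj⟩ : ℤ) - 1) →
      pr N (Jflag N l (fun k => (α k : ℤ)) n) = 0) := by
  set τ : Equiv.Perm (Fin l) := Equiv.swap (⟨j, by omega⟩ : Fin l) (⟨j + 1, hj⟩ : Fin l)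
    with hτdef
  set β : Fin l → ℤ := fun k => (α k : ℤ) with hβ
  constructor
  · rw [Jflag_pr, Jflag_pr]
    have step : ∀ σ : Equiv.Perm (Fin l), ((Equiv.Perm.sign σ : ℤˣ) : ℤ) •
        ((List.ofFn fun k : Fin l =>
          pr N (esymFlagZ N (n k) (β k + ((σ k : ℕ) : ℤ) - ((k : ℕ) : ℤ)))).prod)
        = - (((Equiv.Perm.sign (σ * τ) : ℤˣ) : ℤ) •
          (List.ofFn fun k : Fin l =>
            pr N (esymFlagZ N (n k) (swapComp l β j hj k
              + (((σ * τ) k : ℕ) : ℤ) - ((k : ℕ) : ℤ)))).prod) := by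
      intro σ
      rw [G_swap l β n j hj hn σ, hτdef, sign_mul_swap_neg j hj σ, neg_smul, neg_neg]
    rw [Finset.sum_congr rfl (fun σ _ => step σ), Finset.sum_neg_distrib]
    congr 1
    exact Fintype.sum_equiv (Equiv.mulRight τ)
      (fun σ => ((Equiv.Perm.sign (σ * τ) : ℤˣ) : ℤ) •
        (List.ofFn fun k : Fin l =>
          pr N (esymFlagZ N (n k) (swapComp l β j hj k
            + (((σ * τ) k : ℕ) : ℤ) - ((k : ℕ) : ℤ)))).prod)
      (fun ρ => ((Equiv.Perm.sign ρ : ℤˣ) : ℤ) •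
        (List.ofFn fun k : Fin l =>
          pr N (esymFlagZ N (n k) (swapComp l β j hj k
            + ((ρ k : ℕ) : ℤ) - ((k : ℕ) : ℤ)))).prod)
      (fun σ => rfl)
  · intro hα
    have hswapfix : swapComp l β j hj = β := by
      funext k
      simp only [swapComp]
      split_ifs with h1 h2
      · have hk : k = ⟨j, by omega⟩ := Fin.ext h1
        rw [hk]
        simp only [hβ]
        omega
      · have hk : k = ⟨j + 1, hj⟩ := Fin.ext h2
        rw [hk]
        simp only [hβ]
        omega
      · rfl
    rw [Jflag_pr]
    refine Finset.sum_ninvolution (fun σ => σ * τ) ?_ ?_ ?_ ?_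
    · intro σ
      have hG := G_swap (N := N) l β n j hj hn σ
      rw [hswapfix] at hG
      rw [← hG, hτdef, sign_mul_swap_neg j hj σ, neg_smul]
      exact add_neg_cancel _
    · intro σ _
      rw [hτdef]
      exact swap_mul_ne j hj σ
    · intro σ
      exact Finset.mem_univ _
    · intro σ
      show σ * τ * τ = σ
      rw [mul_assoc, hτdef, Equiv.swap_mul_self, mul_one]

end
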